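/- Along any differentiable solution of the OIM dynamics, the energy dissipates at rate equal to −2 times the squared speed: if θ : ℝ → ℝ^N is differentiable with θ'(t) = f(θ(t)) for all t, then d/dt [E(θ(t))] = −2·∑_i (f(θ(t)) i)² ≤ 0 for all t. -/

import Mathlib

/-- The OIM energy (Lyapunov) function
`E(θ) = -K ∑_{i ≠ j} W i j cos(θ i - θ j) - K_s ∑ i cos(2 θ i)`. -/
noncomputable def oimEnergy (N : ℕ) (W : Fin N → Fin N → ℝ) (K Ks : ℝ)
    (θ : Fin N → ℝ) : ℝ :=
  -K * ∑ i, ∑ j ∈ Finset.univ.filter (fun j => j ≠ i), W i j * Real.cos (θ i - θ j)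
    - Ks * ∑ i, Real.cos (2 * θ i)

/-- The OIM vector field
`f(θ) i = -K ∑_{j ≠ i} W i j sin(θ i - θ j) - K_s sin(2 θ i)`. -/
noncomputable def oimField (N : ℕ) (W : Fin N → Fin N → ℝ) (K Ks : ℝ)
    (θ : Fin N → ℝ) : Fin N → ℝ :=
  fun i => -K * ∑ j ∈ Finset.univ.filter (fun j => j ≠ i), W i j * Real.sin (θ i - θ j)
    - Ks * Real.sin (2 * θ i)

/-- Along any differentiable solution of the OIM dynamics `θ' = f(θ)`, the energy
dissipates at rate `-2 ∑ i (f(θ(t)) i)²  ≤ 0`. -/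
theorem oim_energy_dissipation (N : ℕ) (W : Fin N → Fin N → ℝ)
    (hsymm : ∀ i j, W i j = W j i) (hdiag : ∀ i, W i i = 0)
    (K Ks : ℝ) (θ : ℝ → Fin N → ℝ) (hθ : Differentiable ℝ θ)
    (hode : ∀ t, deriv θ t = oimField N W K Ks (θ t)) (t : ℝ) :
    HasDerivAt (fun τ : ℝ => oimEnergy N W K Ks (θ τ))
      (-2 * ∑ i, (oimField N W K Ks (θ t) i) ^ 2) t ∧
    -2 * ∑ i, (oimField N W K Ks (θ t) i) ^ 2 ≤ 0 := by
  set F := oimField N W K Ks (θ t) with hFdef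
  have hF : ∀ i, HasDerivAt (fun τ => θ τ i) (F i) t := by
    intro i
    have h := (hθ t).hasDerivAt
    rw [hode t] at h
    exact hasDerivAt_pi.mp h i
  have key : HasDerivAt (fun τ : ℝ => oimEnergy N W K Ks (θ τ))
      (-K * ∑ i, ∑ j ∈ Finset.univ.filter (fun j => j ≠ i),
          W i j * (-Real.sin (θ t i - θ t j) * (F i - F j))
        - Ks * ∑ i, -Real.sin (2 * θ t i) * (2 * F i)) t := by
    apply HasDerivAt.sub
    · apply HasDerivAt.const_mul
      apply HasDerivAt.fun_sum
      intro i _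
      apply HasDerivAt.fun_sum
      intro j _
      exact (((hF i).sub (hF j)).cos).const_mul _
    · apply HasDerivAt.const_mul
      apply HasDerivAt.fun_sum
      intro i _
      exact ((hF i).const_mul 2).cos
  constructor
  · convert key using 1
    set S : Fin N → ℝ := fun i => ∑ j, W i j * Real.sin (θ t i - θ t j) with hS
    -- filter sums equal full sums
    have e1 : ∀ i, ∑ j ∈ Finset.univ.filter (fun j => j ≠ i),
        W i j * (-Real.sin (θ t i - θ t j) * (F i - F j))
        = ∑ j, W i j * (-Real.sin (θ t i - θ t j) * (F i - F j)) := by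
      intro i
      refine Finset.sum_filter_of_ne ?_
      intro j _ hne h
      subst h
      rw [hdiag] at hne
      simp at hne
    have e2 : ∀ i, ∑ j ∈ Finset.univ.filter (fun j => j ≠ i),
        W i j * Real.sin (θ t i - θ t j) = S i := by
      intro i
      refine Finset.sum_filter_of_ne ?_
      intro j _ hne h
      subst h
      rw [hdiag] at hne
      simp at hne
    have hFi : ∀ i, F i = -K * S i - Ks * Real.sin (2 * θ t i) := by
      intro i
      rw [hFdef]
      simp only [oimField]
      rw [e2 i]
    -- swap lemma
    have hT2 : ∑ i, ∑ j, W i j * Real.sin (θ t i - θ t j) * F j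
        = -∑ i, S i * F i := by
      rw [Finset.sum_comm, ← Finset.sum_neg_distrib]
      refine Finset.sum_congr rfl fun a _ => ?_
      rw [hS, ← neg_mul, ← Finset.sum_neg_distrib, Finset.sum_mul]
      refine Finset.sum_congr rfl fun b _ => ?_
      rw [hsymm b a, show θ t b - θ t a = -(θ t a - θ t b) by ring, Real.sin_neg]
      ring
    simp only [e1]
    have expand : ∀ i j : Fin N,
        W i j * (-Real.sin (θ t i - θ t j) * (F i - F j))
        = -(W i j * Real.sin (θ t i - θ t j) * F i)
          + W i j * Real.sin (θ t i - θ t j) * F j := fun i j => by ring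
    simp only [expand, Finset.sum_add_distrib, Finset.sum_neg_distrib]
    rw [hT2]
    simp only [← Finset.sum_mul]
    calc -2 * ∑ i, F i ^ 2
        = ∑ i, (-K * (-(S i * F i) + -(S i * F i))
            - Ks * (-Real.sin (2 * θ t i) * (2 * F i))) := by
          rw [Finset.mul_sum]
          refine Finset.sum_congr rfl fun i _ => ?_
          rw [hFi i]; ring
      _ = -K * ∑ i, (-(S i * F i) + -(S i * F i))
            - Ks * ∑ i, -Real.sin (2 * θ t i) * (2 * F i) := by
          rw [Finset.sum_sub_distrib, Finset.mul_sum, Finset.mul_sum]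
      _ = -K * (-(∑ i, S i * F i) + -∑ i, S i * F i)
            - Ks * ∑ i, -Real.sin (2 * θ t i) * (2 * F i) := by
          rw [Finset.sum_add_distrib, Finset.sum_neg_distrib]
  · have h0 : (0:ℝ) ≤ ∑ i, F i ^ 2 := Finset.sum_nonneg fun i _ => sq_nonneg _
    linarith
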